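/- arXiv:2005.06533 — 12 statements merged into one kernel-verified Lean document; each statement's English description precedes it below -/
import Mathlib

section
/- A lattice L is distributive if and only if for all a ≤ b in L there exists a join-endomorphism f : L → L with f(b) = a and f(x) ≤ x for all x. -/
theorem distributive_iff_join_endomorphism {α : Type*} [Lattice α] :
    (∀ a b c : α, a ⊓ (b ⊔ c) = (a ⊓ b) ⊔ (a ⊓ c)) ↔
    (∀ a b : α, a ≤ b → ∃ f : α → α,
      (∀ x y : α, f (x ⊔ y) = f x ⊔ f y) ∧ f b = a ∧ ∀ x : α, f x ≤ x) := by
  constructor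
  · intro h a b hab
    refine ⟨fun x => a ⊓ x, fun x y => h a x y, ?_, fun x => inf_le_right⟩
    exact inf_eq_left.mpr hab
  · intro h a b c
    refine le_antisymm ?_ (sup_le (inf_le_inf_left a le_sup_left)
      (inf_le_inf_left a le_sup_right))
    obtain ⟨f, hj, hfb, hle⟩ := h (a ⊓ (b ⊔ c)) (b ⊔ c) inf_le_right
    have hmono : ∀ x y : α, x ≤ y → f x ≤ f y := by
      intro x y hxy
      have : f y = f x ⊔ f y := by rw [← hj, sup_eq_right.mpr hxy]
      rw [this]; exact le_sup_left
    have hfbc : f b ⊔ f c = a ⊓ (b ⊔ c) := by rw [← hj, hfb]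
    have h1 : f b ≤ a ⊓ b :=
      le_inf ((hmono b (b ⊔ c) le_sup_left).trans (hfb ▸ inf_le_left)) (hle b)
    have h2 : f c ≤ a ⊓ c :=
      le_inf ((hmono c (b ⊔ c) le_sup_right).trans (hfb ▸ inf_le_left)) (hle c)
    calc a ⊓ (b ⊔ c) = f b ⊔ f c := hfbc.symm
      _ ≤ (a ⊓ b) ⊔ (a ⊓ c) := sup_le_sup h1 h2
end

section
/- If a residuated lattice satisfies the left prelinearity law (x\y ∧ e) ∨ (y\x ∧ e) = e, then it satisfies (y ∧ z)\x = (y\x) ∨ (z\x). -/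
/-- A residuated lattice: a lattice-ordered monoid with left and right residuals. -/
class ResiduatedLattice (α : Type*) extends Lattice α, Monoid α where
  /-- `ldiv a c` is `a \ c`. -/
  ldiv : α → α → α
  /-- `rdiv c b` is `c / b`. -/
  rdiv : α → α → α
  mul_le_iff_le_rdiv : ∀ a b c : α, a * b ≤ c ↔ a ≤ rdiv c b
  mul_le_iff_le_ldiv : ∀ a b c : α, a * b ≤ c ↔ b ≤ ldiv a c

open ResiduatedLattice

section Aux
variable {α : Type*} [ResiduatedLattice α]

lemma my_mul_le_mul_left (c : α) {a b : α} (h : a ≤ b) : c * a ≤ c * b :=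
  (mul_le_iff_le_ldiv c a (c * b)).mpr (h.trans ((mul_le_iff_le_ldiv c b (c * b)).mp le_rfl))

lemma my_mul_le_mul_right (c : α) {a b : α} (h : a ≤ b) : a * c ≤ b * c :=
  (mul_le_iff_le_rdiv a c (b * c)).mpr (h.trans ((mul_le_iff_le_rdiv b c (b * c)).mp le_rfl))

lemma my_sup_mul (a b c : α) : (a ⊔ b) * c ≤ a * c ⊔ b * c :=
  (mul_le_iff_le_rdiv _ _ _).mpr (sup_le
    ((mul_le_iff_le_rdiv _ _ _).mp le_sup_left)
    ((mul_le_iff_le_rdiv _ _ _).mp le_sup_right))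

lemma key_step (x y z : α) : (ldiv y z ⊓ 1) * ldiv (y ⊓ z) x ≤ ldiv y x := by
  rw [← mul_le_iff_le_ldiv, ← mul_assoc]
  have h1 : y * (ldiv y z ⊓ 1) ≤ y ⊓ z := le_inf
    (le_of_le_of_eq (my_mul_le_mul_left y inf_le_right) (mul_one y))
    ((my_mul_le_mul_left y inf_le_left).trans ((mul_le_iff_le_ldiv y _ z).mpr le_rfl))
  exact (my_mul_le_mul_right _ h1).trans ((mul_le_iff_le_ldiv _ _ _).mpr le_rfl)

lemma ldiv_anti {a b : α} (c : α) (h : a ≤ b) : ldiv b c ≤ ldiv a c := by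
  rw [← mul_le_iff_le_ldiv]
  exact (my_mul_le_mul_right _ h).trans ((mul_le_iff_le_ldiv b _ c).mpr le_rfl)

end Aux

theorem lpl_implies_lpl2 {α : Type*} [ResiduatedLattice α]
    (hLPL : ∀ x y : α, (ldiv x y ⊓ 1) ⊔ (ldiv y x ⊓ 1) = 1) (x y z : α) :
    ldiv (y ⊓ z) x = ldiv y x ⊔ ldiv z x := by
  apply le_antisymm
  · calc ldiv (y ⊓ z) x = ((ldiv y z ⊓ 1) ⊔ (ldiv z y ⊓ 1)) * ldiv (y ⊓ z) x := by
          rw [hLPL, one_mul]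
      _ ≤ (ldiv y z ⊓ 1) * ldiv (y ⊓ z) x ⊔ (ldiv z y ⊓ 1) * ldiv (y ⊓ z) x :=
          my_sup_mul _ _ _
      _ ≤ ldiv y x ⊔ ldiv z x := by
          apply sup_le_sup (key_step x y z)
          have := key_step x z y
          rwa [inf_comm y z]
  · exact sup_le (ldiv_anti x inf_le_left) (ldiv_anti x inf_le_right)
end

section
/- If a residuated lattice satisfies the left prelinearity law (x\y ∧ e) ∨ (y\x ∧ e) = e, then it satisfies x\(y ∨ z) = (x\y) ∨ (x\z). -/
open ResiduatedLattice

section aux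
variable {α : Type*} [ResiduatedLattice α]

lemma rl_mul_ldiv_le (a c : α) : a * ldiv a c ≤ c :=
  (mul_le_iff_le_ldiv a (ldiv a c) c).2 le_rfl

lemma rl_mul_le_mul_left {b c : α} (a : α) (h : b ≤ c) : a * b ≤ a * c :=
  (mul_le_iff_le_ldiv a b (a * c)).2
    (le_trans h ((mul_le_iff_le_ldiv a c (a * c)).1 le_rfl))

lemma rl_mul_le_mul_right {b c : α} (a : α) (h : b ≤ c) : b * a ≤ c * a :=
  (mul_le_iff_le_rdiv b a (c * a)).2
    (le_trans h ((mul_le_iff_le_rdiv c a (c * a)).1 le_rfl))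

lemma rl_mul_sup (a b c : α) : a * (b ⊔ c) = a * b ⊔ a * c := by
  apply le_antisymm
  · rw [mul_le_iff_le_ldiv]
    exact sup_le ((mul_le_iff_le_ldiv _ _ _).1 le_sup_left)
      ((mul_le_iff_le_ldiv _ _ _).1 le_sup_right)
  · exact sup_le (rl_mul_le_mul_left a le_sup_left) (rl_mul_le_mul_left a le_sup_right)

lemma rl_sup_mul (a b c : α) : (a ⊔ b) * c = a * c ⊔ b * c := by
  apply le_antisymm
  · rw [mul_le_iff_le_rdiv]
    exact sup_le ((mul_le_iff_le_rdiv _ _ _).1 le_sup_left)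
      ((mul_le_iff_le_rdiv _ _ _).1 le_sup_right)
  · exact sup_le (rl_mul_le_mul_right c le_sup_left) (rl_mul_le_mul_right c le_sup_right)

/-- `(y ⊔ z) * (ldiv z y ⊓ 1) ≤ y`. -/
lemma rl_key (y z : α) : (y ⊔ z) * (ldiv z y ⊓ 1) ≤ y := by
  rw [rl_sup_mul]
  apply sup_le
  · calc y * (ldiv z y ⊓ 1) ≤ y * 1 := rl_mul_le_mul_left y inf_le_right
      _ = y := mul_one y
  · calc z * (ldiv z y ⊓ 1) ≤ z * ldiv z y := rl_mul_le_mul_left z inf_le_left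
      _ ≤ y := rl_mul_ldiv_le z y

end aux

theorem lpl_implies_lpl3 {α : Type*} [ResiduatedLattice α]
    (hLPL : ∀ x y : α, (ldiv x y ⊓ 1) ⊔ (ldiv y x ⊓ 1) = 1) (x y z : α) :
    ldiv x (y ⊔ z) = ldiv x y ⊔ ldiv x z := by
  set u := ldiv x (y ⊔ z) with hu
  have hx : x * u ≤ y ⊔ z := rl_mul_ldiv_le x (y ⊔ z)
  apply le_antisymm
  · have h1 : u * (ldiv z y ⊓ 1) ≤ ldiv x y := by
      rw [← mul_le_iff_le_ldiv, ← mul_assoc]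
      calc x * u * (ldiv z y ⊓ 1) ≤ (y ⊔ z) * (ldiv z y ⊓ 1) :=
            rl_mul_le_mul_right _ hx
        _ ≤ y := rl_key y z
    have h2 : u * (ldiv y z ⊓ 1) ≤ ldiv x z := by
      rw [← mul_le_iff_le_ldiv, ← mul_assoc]
      calc x * u * (ldiv y z ⊓ 1) ≤ (y ⊔ z) * (ldiv y z ⊓ 1) :=
            rl_mul_le_mul_right _ hx
        _ = (z ⊔ y) * (ldiv y z ⊓ 1) := by rw [sup_comm]
        _ ≤ z := rl_key z y
    calc u = u * 1 := (mul_one u).symm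
      _ = u * ((ldiv y z ⊓ 1) ⊔ (ldiv z y ⊓ 1)) := by rw [hLPL y z]
      _ = u * (ldiv y z ⊓ 1) ⊔ u * (ldiv z y ⊓ 1) := rl_mul_sup u _ _
      _ ≤ ldiv x y ⊔ ldiv x z := sup_le (le_trans h2 le_sup_right) (le_trans h1 le_sup_left)
  · exact sup_le
      ((mul_le_iff_le_ldiv _ _ _).1 (le_trans (rl_mul_ldiv_le x y) le_sup_left))
      ((mul_le_iff_le_ldiv _ _ _).1 (le_trans (rl_mul_ldiv_le x z) le_sup_right))
end

section
/- In a residuated lattice satisfying the distributivity equation e ∧ (y ∨ z) = (e ∧ y) ∨ (e ∧ z), the equation (y ∧ z)\x = (y\x) ∨ (z\x) implies the left prelinearity law (x\y ∧ e) ∨ (y\x ∧ e) = e. -/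
open ResiduatedLattice

theorem lpl2_implies_lpl {α : Type*} [ResiduatedLattice α]
    (hdistr : ∀ y z : α, 1 ⊓ (y ⊔ z) = (1 ⊓ y) ⊔ (1 ⊓ z))
    (hLPL2 : ∀ x y z : α, ldiv (y ⊓ z) x = ldiv y x ⊔ ldiv z x) (x y : α) :
    (ldiv x y ⊓ 1) ⊔ (ldiv y x ⊓ 1) = 1 := by
  have h1 : (1 : α) ≤ ldiv (x ⊓ y) (x ⊓ y) :=
    (mul_le_iff_le_ldiv _ _ _).mp (by simp)
  have hx : ldiv x (x ⊓ y) ≤ ldiv x y :=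
    (mul_le_iff_le_ldiv _ _ _).mp
      (le_trans ((mul_le_iff_le_ldiv x _ (x ⊓ y)).mpr le_rfl) inf_le_right)
  have hy : ldiv y (x ⊓ y) ≤ ldiv y x :=
    (mul_le_iff_le_ldiv _ _ _).mp
      (le_trans ((mul_le_iff_le_ldiv y _ (x ⊓ y)).mpr le_rfl) inf_le_left)
  have hsup : (1 : α) ≤ ldiv x y ⊔ ldiv y x := by
    calc (1 : α) ≤ ldiv (x ⊓ y) (x ⊓ y) := h1
    _ = ldiv x (x ⊓ y) ⊔ ldiv y (x ⊓ y) := hLPL2 (x ⊓ y) x y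
    _ ≤ ldiv x y ⊔ ldiv y x := sup_le_sup hx hy
  calc (ldiv x y ⊓ 1) ⊔ (ldiv y x ⊓ 1)
      = (1 ⊓ ldiv x y) ⊔ (1 ⊓ ldiv y x) := by rw [inf_comm, inf_comm (ldiv y x)]
    _ = 1 ⊓ (ldiv x y ⊔ ldiv y x) := (hdistr _ _).symm
    _ = 1 := inf_eq_left.mpr hsup
end

section
/- In a residuated lattice satisfying e ∧ (y ∨ z) = (e ∧ y) ∨ (e ∧ z), the equation x\(y ∨ z) = (x\y) ∨ (x\z) implies the left prelinearity law (x\y ∧ e) ∨ (y\x ∧ e) = e. -/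
open ResiduatedLattice

theorem lpl3_implies_lpl {α : Type*} [ResiduatedLattice α]
    (hdistr : ∀ y z : α, 1 ⊓ (y ⊔ z) = (1 ⊓ y) ⊔ (1 ⊓ z))
    (hLPL3 : ∀ x y z : α, ldiv x (y ⊔ z) = ldiv x y ⊔ ldiv x z) (x y : α) :
    (ldiv x y ⊓ 1) ⊔ (ldiv y x ⊓ 1) = 1 := by
  -- basic facts
  have hmul : ∀ a b c : α, a ≤ b → a * c ≤ b * c := by
    intro a b c hab
    have h1 : b ≤ rdiv (b * c) c := (mul_le_iff_le_rdiv b c (b * c)).mp le_rfl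
    exact (mul_le_iff_le_rdiv a c (b * c)).mpr (le_trans hab h1)
  have hanti : ∀ a b c : α, a ≤ b → ldiv b c ≤ ldiv a c := by
    intro a b c hab
    have h1 : b * ldiv b c ≤ c := (mul_le_iff_le_ldiv b (ldiv b c) c).mpr le_rfl
    exact (mul_le_iff_le_ldiv a (ldiv b c) c).mp (le_trans (hmul a b _ hab) h1)
  have hrefl : (1 : α) ≤ ldiv (x ⊔ y) (x ⊔ y) := by
    refine (mul_le_iff_le_ldiv (x ⊔ y) 1 (x ⊔ y)).mp ?_
    simp
  have key : (1 : α) ≤ ldiv x y ⊔ ldiv y x := by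
    have := hLPL3 (x ⊔ y) x y
    calc (1 : α) ≤ ldiv (x ⊔ y) (x ⊔ y) := hrefl
      _ = ldiv (x ⊔ y) x ⊔ ldiv (x ⊔ y) y := this
      _ ≤ ldiv y x ⊔ ldiv x y :=
          sup_le_sup (hanti y (x ⊔ y) x le_sup_right) (hanti x (x ⊔ y) y le_sup_left)
      _ = ldiv x y ⊔ ldiv y x := sup_comm _ _
  have : (1 : α) ⊓ (ldiv x y ⊔ ldiv y x) = 1 := inf_eq_left.mpr key
  rw [hdistr] at this
  rw [inf_comm (ldiv x y) 1, inf_comm (ldiv y x) 1]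
  exact this
end

section
/- If a residuated lattice satisfies x\(y ∨ z) = (x\y) ∨ (x\z) and x\x = e, then its lattice reduct is distributive. -/
open ResiduatedLattice

theorem lpl3_div_self_implies_distributive {α : Type*} [ResiduatedLattice α]
    (hLPL3 : ∀ x y z : α, ldiv x (y ⊔ z) = ldiv x y ⊔ ldiv x z)
    (hdiv : ∀ x : α, ldiv x x = 1) (a b c : α) :
    a ⊓ (b ⊔ c) = (a ⊓ b) ⊔ (a ⊓ c) := by
  -- basic facts
  have mul_le_mul_left' : ∀ {u v : α} (w : α), u ≤ v → w * u ≤ w * v := by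
    intro u v w h
    exact (mul_le_iff_le_ldiv w u (w * v)).mpr
      (le_trans h ((mul_le_iff_le_ldiv w v (w * v)).mp le_rfl))
  have mul_le_mul_right' : ∀ {u v : α} (w : α), u ≤ v → u * w ≤ v * w := by
    intro u v w h
    exact (mul_le_iff_le_rdiv u w (v*w)).mpr
      (le_trans h ((mul_le_iff_le_rdiv v w (v*w)).mp le_rfl))
  have mul_sup : ∀ w u v : α, w * (u ⊔ v) = w * u ⊔ w * v := by
    intro w u v
    apply le_antisymm
    · rw [mul_le_iff_le_ldiv]
      exact sup_le ((mul_le_iff_le_ldiv _ _ _).mp le_sup_left)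
        ((mul_le_iff_le_ldiv _ _ _).mp le_sup_right)
    · exact sup_le (mul_le_mul_left' w le_sup_left) (mul_le_mul_left' w le_sup_right)
  set d := a ⊓ (b ⊔ c) with hd
  have hde : d ≤ b ⊔ c := inf_le_right
  set s := b ⊔ c
  -- f x = d * ldiv s x
  have hmul_div_le : ∀ x : α, s * ldiv s x ≤ x := fun x =>
    (mul_le_iff_le_ldiv s (ldiv s x) x).mpr le_rfl
  have hfb_le : ∀ x : α, d * ldiv s x ≤ x := fun x =>
    le_trans (mul_le_mul_right' _ hde) (hmul_div_le x)
  have hldiv_mono : ∀ {u v : α}, u ≤ v → ldiv s u ≤ ldiv s v := by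
    intro u v h
    have : ldiv s v = ldiv s u ⊔ ldiv s v := by
      rw [← hLPL3, sup_eq_right.mpr h]
    rw [this]; exact le_sup_left
  have hf_le_d : ∀ x : α, x ≤ s → d * ldiv s x ≤ d := by
    intro x hx
    have h1 : ldiv s x ≤ (1 : α) := hdiv s ▸ hldiv_mono hx
    calc d * ldiv s x ≤ d * 1 := mul_le_mul_left' d h1
      _ = d := mul_one d
  have key : d = d * ldiv s b ⊔ d * ldiv s c := by
    rw [← mul_sup, ← hLPL3]
    show d = d * ldiv s s
    rw [hdiv, mul_one]
  apply le_antisymm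
  · rw [key]
    exact sup_le
      (le_sup_of_le_left (le_inf (le_trans (hf_le_d b le_sup_left) inf_le_left) (hfb_le b)))
      (le_sup_of_le_right (le_inf (le_trans (hf_le_d c le_sup_right) inf_le_left) (hfb_le c)))
  · exact sup_le (le_inf inf_le_left (le_trans inf_le_right le_sup_left))
      (le_inf inf_le_left (le_trans inf_le_right le_sup_right))
end

section
/- Every prelinear cancellative residuated lattice has a distributive lattice reduct. -/
open ResiduatedLattice

theorem prelinear_cancellative_distributive {α : Type*} [ResiduatedLattice α]
    (hLPL : ∀ x y : α, (ldiv x y ⊓ 1) ⊔ (ldiv y x ⊓ 1) = 1)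
    (hRPL : ∀ x y : α, (rdiv x y ⊓ 1) ⊔ (rdiv y x ⊓ 1) = 1)
    (hcanc : ∀ x y : α, rdiv (x * y) y = x ∧ ldiv y (y * x) = x) (a b c : α) :
    a ⊓ (b ⊔ c) = (a ⊓ b) ⊔ (a ⊓ c) := by
  have monoR : ∀ x y z : α, x ≤ y → z * x ≤ z * y := by
    intro x y z h
    rw [mul_le_iff_le_ldiv]
    exact h.trans ((mul_le_iff_le_ldiv z y (z * y)).mp le_rfl)
  have monoL : ∀ x y z : α, x ≤ y → x * z ≤ y * z := by
    intro x y z h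
    rw [mul_le_iff_le_rdiv]
    exact h.trans ((mul_le_iff_le_rdiv y z (y * z)).mp le_rfl)
  have distR : ∀ x u v : α, x * (u ⊔ v) = x * u ⊔ x * v := by
    intro x u v
    apply le_antisymm
    · rw [mul_le_iff_le_ldiv, sup_le_iff, ← mul_le_iff_le_ldiv, ← mul_le_iff_le_ldiv]
      exact ⟨le_sup_left, le_sup_right⟩
    · exact sup_le (monoR _ _ _ le_sup_left) (monoR _ _ _ le_sup_right)
  have distL : ∀ x u v : α, (u ⊔ v) * x = u * x ⊔ v * x := by
    intro x u v
    apply le_antisymm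
    · rw [mul_le_iff_le_rdiv, sup_le_iff, ← mul_le_iff_le_rdiv, ← mul_le_iff_le_rdiv]
      exact ⟨le_sup_left, le_sup_right⟩
    · exact sup_le (monoL _ _ _ le_sup_left) (monoL _ _ _ le_sup_right)
  have hdiv : ∀ x y : α, x * ldiv x y ≤ y := fun x y =>
    (mul_le_iff_le_ldiv x (ldiv x y) y).mpr le_rfl
  set u := ldiv b c ⊓ (1 : α) with hu
  set v := ldiv c b ⊓ (1 : α) with hv
  have huv : u ⊔ v = 1 := hLPL b c
  apply le_antisymm
  · have key : a ⊓ (b ⊔ c) = (a ⊓ (b ⊔ c)) * u ⊔ (a ⊓ (b ⊔ c)) * v := by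
      rw [← distR, huv, mul_one]
    have h1 : (a ⊓ (b ⊔ c)) * u ≤ a ⊓ c := by
      refine le_inf ?_ ?_
      · calc (a ⊓ (b ⊔ c)) * u ≤ a * u := monoL _ _ _ inf_le_left
          _ ≤ a * 1 := monoR _ _ _ inf_le_right
          _ = a := mul_one a
      · calc (a ⊓ (b ⊔ c)) * u ≤ (b ⊔ c) * u := monoL _ _ _ inf_le_right
          _ = b * u ⊔ c * u := distL _ _ _
          _ ≤ c := by
              refine sup_le ?_ ?_
              · exact le_trans (monoR _ _ _ inf_le_left) (hdiv b c)
              · exact le_trans (monoR _ _ _ inf_le_right) (le_of_eq (mul_one c))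
    have h2 : (a ⊓ (b ⊔ c)) * v ≤ a ⊓ b := by
      refine le_inf ?_ ?_
      · calc (a ⊓ (b ⊔ c)) * v ≤ a * v := monoL _ _ _ inf_le_left
          _ ≤ a * 1 := monoR _ _ _ inf_le_right
          _ = a := mul_one a
      · calc (a ⊓ (b ⊔ c)) * v ≤ (b ⊔ c) * v := monoL _ _ _ inf_le_right
          _ = b * v ⊔ c * v := distL _ _ _
          _ ≤ b := by
              refine sup_le ?_ ?_
              · exact le_trans (monoR _ _ _ inf_le_right) (le_of_eq (mul_one b))
              · exact le_trans (monoR _ _ _ inf_le_left) (hdiv c b)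
    calc a ⊓ (b ⊔ c) = (a ⊓ (b ⊔ c)) * u ⊔ (a ⊓ (b ⊔ c)) * v := key
      _ ≤ (a ⊓ c) ⊔ (a ⊓ b) := sup_le_sup h1 h2
      _ = (a ⊓ b) ⊔ (a ⊓ c) := sup_comm _ _
  · exact le_inf_sup
end

section
/- A torsion-free nilpotent group has unique roots: if aⁿ = bⁿ for some n ≥ 1, then a = b. -/
/-- Old Mathlib definition (removed since): no nontrivial element has finite order. -/
def Monoid.IsTorsionFree (G : Type*) [Monoid G] : Prop :=
  ∀ g : G, g ≠ 1 → ¬IsOfFinOrder g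

open QuotientGroup

private lemma ucs_key {G : Type*} [Group G] (htf : Monoid.IsTorsionFree G) :
    ∀ (j : ℕ) (x : G) (n : ℕ), 1 ≤ n → x ^ n ∈ Subgroup.upperCentralSeries G j →
      x ∈ Subgroup.upperCentralSeries G (j + 1) → x ∈ Subgroup.upperCentralSeries G j := by
  intro j
  induction j with
  | zero =>
    intro x n hn hxn _
    rw [upperCentralSeries_zero, Subgroup.mem_bot] at *
    by_contra hx
    exact htf x hx (isOfFinOrder_iff_pow_eq_one.mpr ⟨n, by omega, hxn⟩)
  | succ j ih =>
    intro x n hn hxn hx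
    rw [mem_upperCentralSeries_succ_iff] at hx ⊢
    intro y
    set c := x * y * x⁻¹ * y⁻¹ with hc
    have hcU : c ∈ Subgroup.upperCentralSeries G (j + 1) := hx y
    -- work in the quotient by `Subgroup.upperCentralSeries G j`
    set N := Subgroup.upperCentralSeries G j with hN
    let π := QuotientGroup.mk' N
    have hπ : ∀ g : G, g ∈ N → π g = 1 := fun g hg => (QuotientGroup.eq_one_iff g).mpr hg
    -- π x commutes with π c
    have hcomm : Commute (π c) (π x) := by
      rw [← commutatorElement_eq_one_iff_commute]
      have : c * x * c⁻¹ * x⁻¹ ∈ N := by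
        rw [mem_upperCentralSeries_succ_iff] at hcU
        exact hcU x
      simpa [commutatorElement_def, map_mul, map_inv] using hπ _ this
    have hz : π x * π y = π c * π y * π x := by
      have : π c = π x * π y * (π x)⁻¹ * (π y)⁻¹ := by simp [hc, map_mul, map_inv]
      rw [this]; group
    have hclaim : ∀ m : ℕ, (π x) ^ m * π y = (π c) ^ m * π y * (π x) ^ m := by
      intro m
      induction m with
      | zero => simp
      | succ m ihm =>
        have hcm : Commute ((π c) ^ m) (π x) := hcomm.pow_left m
        calc (π x) ^ (m + 1) * π y = π x * ((π x) ^ m * π y) := by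
              rw [pow_succ']; group
          _ = π x * ((π c) ^ m * π y * (π x) ^ m) := by rw [ihm]
          _ = (π c) ^ m * (π x * π y) * (π x) ^ m := by
              rw [← mul_assoc, ← mul_assoc, (hcm.symm.eq)]; group
          _ = (π c) ^ m * (π c * π y * π x) * (π x) ^ m := by rw [hz]
          _ = (π c) ^ (m + 1) * π y * (π x) ^ (m + 1) := by
              rw [pow_succ, pow_succ']; group
    -- x^n ∈ U(j+1) gives that π(x)^n commutes with π y
    have hxn' : (π x) ^ n * π y = π y * (π x) ^ n := by
      rw [mem_upperCentralSeries_succ_iff] at hxn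
      have : x ^ n * y * (x ^ n)⁻¹ * y⁻¹ ∈ N := hxn y
      have h1 : π (x ^ n) * π y * (π (x ^ n))⁻¹ * (π y)⁻¹ = 1 := by
        simpa [map_mul, map_inv] using hπ _ this
      have := commutatorElement_eq_one_iff_commute.mp (by simpa [commutatorElement_def] using h1)
      simpa [map_pow] using this.eq
    have hzn : (π c) ^ n = 1 := by
      have h2 : (π c) ^ n * (π y * (π x) ^ n) = π y * (π x) ^ n := by
        rw [← mul_assoc, ← hclaim n, hxn']
      have h3 := mul_right_cancel (b := π y * (π x) ^ n) (by simpa [mul_assoc] using h2)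
      simpa using h3
    have hcn : c ^ n ∈ N := by
      rw [show (c ^ n ∈ N) = (π (c ^ n) = 1) from (propext (QuotientGroup.eq_one_iff (c ^ n)).symm)]
      simpa [map_pow] using hzn
    exact ih c n hn hcn hcU

theorem torsion_free_nilpotent_unique_roots {G : Type*} [Group G]
    [Group.IsNilpotent G] (htf : Monoid.IsTorsionFree G)
    (a b : G) (n : ℕ) (hn : 1 ≤ n) (h : a ^ n = b ^ n) : a = b := by
  obtain ⟨c, hc⟩ := Group.IsNilpotent.nilpotent (G := G)
  suffices H : ∀ k : ℕ, b⁻¹ * a ∈ Subgroup.upperCentralSeries G k → a = b by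
    exact H c (hc ▸ Subgroup.mem_top _)
  intro k
  induction k with
  | zero =>
    intro hz
    rw [upperCentralSeries_zero, Subgroup.mem_bot, inv_mul_eq_one] at hz
    exact hz.symm
  | succ k ihk =>
    intro hz
    set z := b⁻¹ * a with hzdef
    set N := Subgroup.upperCentralSeries G k with hN
    let π := QuotientGroup.mk' N
    have hπ : ∀ g : G, g ∈ N → π g = 1 := fun g hg => (QuotientGroup.eq_one_iff g).mpr hg
    have hcomm : Commute (π b) (π z) := by
      rw [← commutatorElement_eq_one_iff_commute]
      rw [mem_upperCentralSeries_succ_iff] at hz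
      have hmem : z * b * z⁻¹ * b⁻¹ ∈ N := hz b
      have h1 : π z * π b * (π z)⁻¹ * (π b)⁻¹ = 1 := by
        simpa [map_mul, map_inv] using hπ _ hmem
      have := commutatorElement_eq_one_iff_commute.mp (by simpa [commutatorElement_def] using h1)
      rw [commutatorElement_eq_one_iff_commute]
      exact this.symm
    have hab : π a = π b * π z := by simp [hzdef, map_mul]
    have hpow : π b ^ n * π z ^ n = π b ^ n := by
      have := congrArg π h
      rw [map_pow, map_pow, hab, hcomm.mul_pow] at this
      exact this
    have hzn1 : (π z) ^ n = 1 := by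
      have := mul_left_cancel (a := π b ^ n) (by simpa using hpow)
      simpa using this
    have hznN : z ^ n ∈ N := by
      rw [show (z ^ n ∈ N) = (π (z ^ n) = 1) from (propext (QuotientGroup.eq_one_iff (z ^ n)).symm)]
      simpa [map_pow] using hzn1
    exact ihk (ucs_key htf k z n hn hznN hz)
end

section
/- In a 2-nilpotent cancellative residuated lattice (one whose monoid satisfies xyzyx = yxzxy), the inequalities (a ∧ e)²·b ≤ b·a and b·(a ∧ e)² ≤ a·b hold for all elements a, b. -/
open ResiduatedLattice

private lemma RL.mul_le_mul_left {α : Type*} [ResiduatedLattice α] {a b : α}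
    (h : a ≤ b) (c : α) : c * a ≤ c * b := by
  rw [mul_le_iff_le_ldiv]
  exact h.trans ((mul_le_iff_le_ldiv c b (c * b)).1 le_rfl)

private lemma RL.mul_le_mul_right {α : Type*} [ResiduatedLattice α] {a b : α}
    (h : a ≤ b) (c : α) : a * c ≤ b * c := by
  rw [mul_le_iff_le_rdiv]
  exact h.trans ((mul_le_iff_le_rdiv b c (b * c)).1 le_rfl)

theorem two_nilpotent_cancellative_conjugation {α : Type*} [ResiduatedLattice α]
    (hcanc : ∀ x y : α, rdiv (x * y) y = x ∧ ldiv y (y * x) = x)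
    (hL2 : ∀ x y z : α, x * y * z * y * x = y * x * z * x * y) (a b : α) :
    (a ⊓ 1) ^ 2 * b ≤ b * a ∧ b * (a ⊓ 1) ^ 2 ≤ a * b := by
  set c : α := a ⊓ 1 with hc
  have hc1 : c ≤ 1 := inf_le_right
  have hca : c ≤ a := inf_le_left
  -- cancellation lemmas
  have cancL : ∀ t u v : α, t * u ≤ t * v → u ≤ v := by
    intro t u v h
    have h2 := (mul_le_iff_le_ldiv t u (t * v)).1 h
    rwa [(hcanc v t).2] at h2
  have cancR : ∀ t u v : α, u * t ≤ v * t → u ≤ v := by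
    intro t u v h
    have h2 := (mul_le_iff_le_rdiv u t (v * t)).1 h
    rwa [(hcanc v t).1] at h2
  -- the key L2 instance : b c c b = c b b c
  have e1 : b * c * c * b = c * b * b * c := by
    have h := hL2 b c 1
    simpa using h
  constructor
  · -- (a ⊓ 1)^2 * b ≤ b * a
    -- first show c * c * b ≤ b * c
    have key : b * (c * c * b * b) ≤ b * (b * c * b) := by
      have h1 : b * (c * c * b * b) = c * (b * b * c * b) := by
        calc b * (c * c * b * b) = b * c * c * b * b := by simp [mul_assoc]
          _ = c * b * b * c * b := by rw [e1]
          _ = c * (b * b * c * b) := by simp [mul_assoc]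
      have h2 : c * (b * b * c * b) ≤ 1 * (b * b * c * b) :=
        RL.mul_le_mul_right hc1 _
      rw [one_mul] at h2
      rw [h1]
      calc c * (b * b * c * b) ≤ b * b * c * b := h2
        _ = b * (b * c * b) := by simp [mul_assoc]
    have k1 : c * c * b * b ≤ b * c * b := cancL _ _ _ key
    have k2 : c * c * b ≤ b * c := by
      apply cancR b
      calc c * c * b * b ≤ b * c * b := k1
        _ = b * c * b := rfl
    have k3 : b * c ≤ b * a := RL.mul_le_mul_left hca b
    calc (a ⊓ 1) ^ 2 * b = c * c * b := by rw [← hc, pow_two]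
      _ ≤ b * c := k2
      _ ≤ b * a := k3
  · -- b * (a ⊓ 1)^2 ≤ a * b
    have key : b * (b * c * c * b) ≤ b * (c * b * b) := by
      have h1 : b * (b * c * c * b) = b * c * b * b * c := by
        calc b * (b * c * c * b) = b * (c * b * b * c) := by rw [← e1]
          _ = b * c * b * b * c := by simp [mul_assoc]
      have h2 : b * c * b * b * c ≤ b * c * b * b * 1 :=
        RL.mul_le_mul_left hc1 _
      rw [mul_one] at h2
      rw [h1]
      calc b * c * b * b * c ≤ b * c * b * b := h2
        _ = b * (c * b * b) := by simp [mul_assoc]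
    have k1 : b * c * c * b ≤ c * b * b := cancL _ _ _ key
    have k2 : b * c * c ≤ c * b := by
      apply cancR b
      exact k1
    have k3 : c * b ≤ a * b := RL.mul_le_mul_right hca b
    calc b * (a ⊓ 1) ^ 2 = b * c * c := by rw [← hc, pow_two, ← mul_assoc]
      _ ≤ c * b := k2
      _ ≤ a * b := k3
end

section
/- Every integral total order on a finitely generated monoid is residuated; that is, if ≤ is a total order on a finitely generated monoid M that is compatible with multiplication (a ≤ b implies cad ≤ cbd) and has the identity as greatest element, then (M, ≤) satisfies the ascending chain condition, and hence for all a, b the sets {c : ac ≤ b} and {c : ca ≤ b} have greatest elements. -/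
theorem integral_total_order_on_fg_monoid_residuated {M : Type*} [Monoid M]
    [LinearOrder M] (hfg : Monoid.FG M)
    (hcompat : ∀ a b c d : M, a ≤ b → c * a * d ≤ c * b * d)
    (htop : ∀ a : M, a ≤ 1) :
    (¬∃ f : ℕ → M, StrictMono f) ∧
    (∀ a b : M, (∃ c : M, a * c ≤ b ∧ ∀ d : M, a * d ≤ b → d ≤ c) ∧
      (∃ c : M, c * a ≤ b ∧ ∀ d : M, d * a ≤ b → d ≤ c)) := by
  -- products of superwords are ≤ products of subwords
  have key : ∀ {u v : List M}, List.SublistForall₂ (· = ·) u v → v.prod ≤ u.prod := by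
    intro u v h
    induction h with
    | @nil l => simpa using htop l.prod
    | @cons a b l1 l2 hab _ ih =>
        subst hab
        rw [List.prod_cons, List.prod_cons]
        simpa using hcompat l2.prod l1.prod a 1 ih
    | @cons_right a l1 l2 _ ih =>
        rw [List.prod_cons]
        calc a * l2.prod ≤ 1 * l2.prod := by simpa using hcompat a 1 1 l2.prod (htop a)
          _ = l2.prod := one_mul _
          _ ≤ l1.prod := ih
  -- ascending chain condition via Higman's lemma
  have acc : ¬∃ f : ℕ → M, StrictMono f := by
    rintro ⟨f, hf⟩
    obtain ⟨S, hS⟩ := hfg.fg_top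
    have hw : ∀ n : ℕ, ∃ l : List M, (∀ x ∈ l, x ∈ (S : Set M)) ∧ l.prod = f n := by
      intro n
      have : f n ∈ Submonoid.closure (S : Set M) := by rw [hS]; trivial
      exact Submonoid.exists_list_of_mem_closure this
    choose w hwmem hwprod using hw
    have pwo : ((S : Set M)).PartiallyWellOrderedOn (· = ·) :=
      (S : Set M).toFinite.partiallyWellOrderedOn
    have hig := pwo.partiallyWellOrderedOn_sublistForall₂ (r := (· = ·))
    obtain ⟨m, n, hmn, hsub⟩ := hig (fun n => ⟨w n, hwmem n⟩)
    have : f n ≤ f m := by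
      rw [← hwprod m, ← hwprod n]
      exact key hsub
    exact absurd (hf hmn) (not_lt.2 this)
  -- every nonempty set has a greatest element
  have greatest : ∀ s : Set M, s.Nonempty → ∃ c ∈ s, ∀ d ∈ s, d ≤ c := by
    rintro s ⟨x0, hx0⟩
    by_contra h
    push_neg at h
    have h' : ∀ c : {x // x ∈ s}, ∃ d : {x // x ∈ s}, (c : M) < d := by
      rintro ⟨c, hc⟩
      obtain ⟨d, hd, hdc⟩ := h c hc
      exact ⟨⟨d, hd⟩, hdc⟩
    choose g hg using h'
    refine acc ⟨fun n => ((g^[n] ⟨x0, hx0⟩ : {x // x ∈ s}) : M), strictMono_nat_of_lt_succ ?_⟩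
    intro n
    rw [Function.iterate_succ_apply']
    exact hg _
  refine ⟨acc, fun a b => ⟨?_, ?_⟩⟩
  · obtain ⟨c, hc, hmax⟩ := greatest {c | a * c ≤ b} ⟨b, by
      show a * b ≤ b
      calc a * b ≤ 1 * b := by simpa using hcompat a 1 1 b (htop a)
        _ = b := one_mul b⟩
    exact ⟨c, hc, fun d hd => hmax d hd⟩
  · obtain ⟨c, hc, hmax⟩ := greatest {c | c * a ≤ b} ⟨b, by
      show b * a ≤ b
      calc b * a ≤ b * 1 := by simpa using hcompat a 1 b 1 (htop a)
        _ = b := mul_one b⟩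
    exact ⟨c, hc, fun d hd => hmax d hd⟩
end

section
/- If T is a totally ordered cancellative residuated lattice with elements a ≤ e and b satisfying ab < ba², then for all n ≥ 1 one has aⁿb < ba^{2n} and abⁿ < bⁿa^{2ⁿ}. -/
open ResiduatedLattice

theorem nilpotency_counterexample_chains {α : Type*} [ResiduatedLattice α]
    (htot : ∀ x y : α, x ≤ y ∨ y ≤ x)
    (hcanc : ∀ x y : α, rdiv (x * y) y = x ∧ ldiv y (y * x) = x)
    (a b : α) (ha : a ≤ 1) (hab : a * b < b * a ^ 2) :
    ∀ n : ℕ, 1 ≤ n → a ^ n * b < b * a ^ (2 * n) ∧ a * b ^ n < b ^ n * a ^ (2 ^ n) := by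
  have hr : ∀ x z y : α, x * y ≤ z * y ↔ x ≤ z := fun x z y => by
    rw [mul_le_iff_le_rdiv, (hcanc z y).1]
  have hl : ∀ y x z : α, y * x ≤ y * z ↔ x ≤ z := fun y x z => by
    rw [mul_le_iff_le_ldiv, (hcanc z y).2]
  have hr' : ∀ x z y : α, x * y < z * y ↔ x < z := fun x z y => by
    simp [lt_iff_le_not_ge, hr]
  have hl' : ∀ y x z : α, y * x < y * z ↔ x < z := fun y x z => by
    simp [lt_iff_le_not_ge, hl]
  have h1 : ∀ n : ℕ, 1 ≤ n → a ^ n * b < b * a ^ (2 * n) := by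
    intro n hn
    induction n with
    | zero => omega
    | succ n ih =>
      rcases Nat.lt_or_ge n 1 with h | hn1
      · obtain rfl : n = 0 := by omega
        simpa using hab
      · 
        calc a ^ (n + 1) * b = a * (a ^ n * b) := by rw [pow_succ', mul_assoc]
          _ < a * (b * a ^ (2 * n)) := (hl' a _ _).mpr (ih hn1)
          _ = (a * b) * a ^ (2 * n) := by rw [mul_assoc]
          _ < (b * a ^ 2) * a ^ (2 * n) := (hr' _ _ _).mpr hab
          _ = b * a ^ (2 * (n + 1)) := by
              rw [mul_assoc, ← pow_add, show 2 + 2 * n = 2 * (n + 1) by omega]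
  have h2 : ∀ n : ℕ, 1 ≤ n → a * b ^ n < b ^ n * a ^ (2 ^ n) := by
    intro n hn
    induction n with
    | zero => omega
    | succ n ih =>
      rcases Nat.lt_or_ge n 1 with h | hn1
      · obtain rfl : n = 0 := by omega
        simpa using hab
      · 
        calc a * b ^ (n + 1) = (a * b ^ n) * b := by rw [pow_succ, ← mul_assoc]
          _ < (b ^ n * a ^ (2 ^ n)) * b := (hr' _ _ _).mpr (ih hn1)
          _ = b ^ n * (a ^ (2 ^ n) * b) := mul_assoc _ _ _
          _ < b ^ n * (b * a ^ (2 * 2 ^ n)) :=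
              (hl' _ _ _).mpr (h1 (2 ^ n) Nat.one_le_two_pow)
          _ = b ^ (n + 1) * a ^ (2 ^ (n + 1)) := by
              rw [← mul_assoc, ← pow_succ, show 2 * 2 ^ n = 2 ^ (n + 1) by omega]
  exact fun n hn => ⟨h1 n hn, h2 n hn⟩
end

section
/- A commutative cancellative monoid M with unique roots and no nontrivial invertible elements embeds into the negative cone of an Abelian lattice-ordered group. (Special version: a commutative cancellative torsion-free-quotient monoid M with M ∩ M⁻¹ = {e} inside its Grothendieck group G extends to the negative cone of some total order on G.) -/
theorem monoid_extends_to_negative_cone_of_total_order {G : Type*} [CommGroup G]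
    (htf : ∀ g : G, g ≠ 1 → ¬IsOfFinOrder g) (M : Submonoid G)
    (hMinv : ∀ x : G, x ∈ M → x⁻¹ ∈ M → x = 1) :
    ∃ le : G → G → Prop,
      (∀ a : G, le a a) ∧
      (∀ a b : G, le a b → le b a → a = b) ∧
      (∀ a b c : G, le a b → le b c → le a c) ∧
      (∀ a b : G, le a b ∨ le b a) ∧
      (∀ a b c : G, le a b → le (c * a) (c * b)) ∧
      (∀ m : G, m ∈ M → le m 1) := by
  classical
  set S : Set (Set G) := {P | (1 : G) ∈ P ∧ (∀ a b : G, a ∈ P → b ∈ P → a * b ∈ P) ∧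
      (↑M : Set G) ⊆ P ∧ ∀ x ∈ P, x⁻¹ ∈ P → x = 1} with hS
  have hMS : (↑M : Set G) ∈ S := by
    refine ⟨M.one_mem, fun a b ha hb => M.mul_mem ha hb, subset_rfl, fun x hx hx' => hMinv x hx hx'⟩
  obtain ⟨P, hMP, hPS, hPmax⟩ := zorn_subset_nonempty S (fun c hcS hchain hcne => by
    obtain ⟨P₀, hP₀⟩ := hcne
    refine ⟨⋃₀ c, ⟨?_, ?_, ?_, ?_⟩, fun s hs => Set.subset_sUnion_of_mem hs⟩
    · exact ⟨P₀, hP₀, (hcS hP₀).1⟩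
    · rintro a b ⟨Pa, hPa, haPa⟩ ⟨Pb, hPb, hbPb⟩
      rcases hchain.total hPa hPb with h | h
      · exact ⟨Pb, hPb, (hcS hPb).2.1 a b (h haPa) hbPb⟩
      · exact ⟨Pa, hPa, (hcS hPa).2.1 a b haPa (h hbPb)⟩
    · exact fun m hm => ⟨P₀, hP₀, (hcS hP₀).2.2.1 hm⟩
    · rintro x ⟨Pa, hPa, hx⟩ ⟨Pb, hPb, hx'⟩
      rcases hchain.total hPa hPb with h | h
      · exact (hcS hPb).2.2.2 x (h hx) hx'
      · exact (hcS hPa).2.2.2 x hx (h hx')) M hMS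
  obtain ⟨h1P, hmul, hMsub, hinv⟩ := hPS
  have hpow : ∀ x ∈ P, ∀ n : ℕ, x ^ n ∈ P := by
    intro x hx n
    induction n with
    | zero => simpa using h1P
    | succ n ih => rw [pow_succ]; exact hmul _ _ ih hx
  have hext : ∀ g : G, g ∉ P → ∃ k : ℕ, k ≠ 0 ∧ (g ^ k)⁻¹ ∈ P := by
    intro g hg
    by_contra hcon
    push_neg at hcon
    set Q : Set G := {x | ∃ p ∈ P, ∃ n : ℕ, x = p * g ^ n} with hQ
    have hPQ : P ⊆ Q := fun p hp => ⟨p, hp, 0, by simp⟩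
    have hgQ : g ∈ Q := ⟨1, h1P, 1, by simp⟩
    have hQS : Q ∈ S := by
      refine ⟨hPQ h1P, ?_, fun m hm => hPQ (hMsub hm), ?_⟩
      · rintro a b ⟨p, hp, n, rfl⟩ ⟨q, hq, m, rfl⟩
        exact ⟨p * q, hmul _ _ hp hq, n + m, by rw [pow_add, mul_mul_mul_comm]⟩
      · rintro x ⟨p, hp, n, rfl⟩ ⟨q, hq, m, hxinv⟩
        have h1 : (p * q) * g ^ (n + m) = 1 := by
          have : (p * g ^ n) * (q * g ^ m) = 1 := by
            rw [← hxinv, mul_inv_cancel]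
          rw [pow_add, mul_mul_mul_comm]; exact this
        rcases Nat.eq_zero_or_pos (n + m) with h0 | hpos
        · obtain ⟨hn0, hm0⟩ := Nat.add_eq_zero.mp h0
          subst hn0
          have hq' : (p * g ^ 0)⁻¹ ∈ P := by
            rw [hxinv, hm0]; simpa using hq
          exact hinv _ (by simpa using hp) hq'
        · have hpq : (g ^ (n + m))⁻¹ = p * q :=
            (eq_inv_of_mul_eq_one_left h1).symm
          exact absurd (hpq ▸ hmul _ _ hp hq) (hcon (n + m) hpos.ne')
    exact hg (hPmax hQS hPQ hgQ)
  have htot : ∀ g : G, g ∈ P ∨ g⁻¹ ∈ P := by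
    intro g
    by_contra hcon
    push_neg at hcon
    obtain ⟨hg, hg'⟩ := hcon
    obtain ⟨k, hk, hk'⟩ := hext g hg
    obtain ⟨l, hl, hl'⟩ := hext g⁻¹ hg'
    have h1 : (g ^ (k * l))⁻¹ ∈ P := by
      have := hpow _ hk' l
      rwa [inv_pow, ← pow_mul] at this
    have h2 : g ^ (k * l) ∈ P := by
      have he : (g⁻¹ ^ l)⁻¹ = g ^ l := by rw [inv_pow, inv_inv]
      have := hpow _ hl' k
      rwa [he, ← pow_mul, mul_comm l k] at this
    have hone : g ^ (k * l) = 1 := hinv _ h2 h1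
    have hg1 : g = 1 := by
      by_contra hne
      exact htf g hne (isOfFinOrder_iff_pow_eq_one.mpr
        ⟨k * l, Nat.pos_of_ne_zero (by simp [hk, hl]), hone⟩)
    exact hg (hg1 ▸ h1P)
  refine ⟨fun a b => a * b⁻¹ ∈ P, fun a => by simpa using h1P, ?_, ?_, ?_, ?_, ?_⟩
  · intro a b hab hba
    have hba' : (a * b⁻¹)⁻¹ ∈ P := by rw [mul_inv_rev, inv_inv]; exact hba
    exact mul_inv_eq_one.mp (hinv _ hab hba')
  · intro a b c hab hbc
    have := hmul _ _ hab hbc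
    rwa [mul_assoc, inv_mul_cancel_left] at this
  · intro a b
    rcases htot (a * b⁻¹) with h | h
    · exact Or.inl h
    · rw [mul_inv_rev, inv_inv] at h
      exact Or.inr h
  · intro a b c hab
    have h : c * a * (c * b)⁻¹ = a * b⁻¹ := by
      simp [mul_inv_rev, mul_comm, mul_left_comm, mul_assoc]
    rwa [h]
  · intro m hm
    simpa using hMsub hm
end
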